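/- Let ℓ be an odd prime and let x be an integer with x ≢ 2 (mod ℓ) and x ≢ −2 (mod ℓ). Then U_{ℓ−1}(x) ≡ 1 (mod ℓ) or U_{ℓ−1}(x) ≡ −1 (mod ℓ); equivalently, U_{ℓ−1}(x)² ≡ 1 (mod ℓ). -/

import Mathlib

open Polynomial

/-- The monic Chebyshev polynomial of the second kind of degree `d`,
characterized by `U_d(2 cos θ) = sin((d+1)θ)/sin θ`.
It coincides with the Dickson polynomial of the second kind with parameter `a = 1`. -/
noncomputable def chebU (d : ℕ) : Polynomial ℤ := Polynomial.dickson 2 1 d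

lemma dickson_two_one_eval_add_inv {R : Type*} [CommRing R] (y z : R) (h : y * z = 1) :
    ∀ n, (y - z) * (Polynomial.dickson 2 (1 : R) n).eval (y + z) = y ^ (n + 1) - z ^ (n + 1)
  | 0 => by
    simp only [Polynomial.dickson_zero]
    norm_num
  | 1 => by
    simp only [Polynomial.dickson_one, Polynomial.eval_X]
    ring
  | n + 2 => by
    simp only [Polynomial.dickson_add_two, Polynomial.eval_sub, Polynomial.eval_mul,
      Polynomial.eval_X, Polynomial.C_1, Polynomial.map_one, Polynomial.eval_one, one_mul]
    have h1 := dickson_two_one_eval_add_inv y z h (n + 1)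
    have h2 := dickson_two_one_eval_add_inv y z h n
    have e1 : z * y ^ (n + 2) = y ^ (n + 1) := by
      rw [pow_succ' y (n + 1), ← mul_assoc, mul_comm z y, h, one_mul]
    have e2 : y * z ^ (n + 2) = z ^ (n + 1) := by
      rw [pow_succ' z (n + 1), ← mul_assoc, h, one_mul]
    calc (y - z) * ((y + z) * (Polynomial.dickson 2 (1 : R) (n + 1)).eval (y + z)
          - (Polynomial.dickson 2 (1 : R) n).eval (y + z))
        = (y + z) * ((y - z) * (Polynomial.dickson 2 (1 : R) (n + 1)).eval (y + z))
          - (y - z) * (Polynomial.dickson 2 (1 : R) n).eval (y + z) := by ring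
      _ = (y + z) * (y ^ (n + 2) - z ^ (n + 2)) - (y ^ (n + 1) - z ^ (n + 1)) := by rw [h1, h2]
      _ = y ^ (n + 3) - z ^ (n + 3) + (z * y ^ (n + 2) - y ^ (n + 1))
          - (y * z ^ (n + 2) - z ^ (n + 1)) := by ring
      _ = y ^ (n + 3) - z ^ (n + 3) := by rw [e1, e2]; ring

theorem stmt12 (ℓ : ℕ) (hℓ : ℓ.Prime) (hodd : Odd ℓ) (x : ℤ)
    (h2 : ¬ ((ℓ : ℤ) ∣ x - 2)) (h2' : ¬ ((ℓ : ℤ) ∣ x + 2)) :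
    (ℓ : ℤ) ∣ (chebU (ℓ - 1)).eval x - 1 ∨ (ℓ : ℤ) ∣ (chebU (ℓ - 1)).eval x + 1 := by
  haveI : Fact ℓ.Prime := ⟨hℓ⟩
  set x' : ZMod ℓ := (x : ZMod ℓ) with hx'
  -- x' ≠ ±2
  have hsub : x' - 2 ≠ 0 := by
    intro h
    apply h2
    rw [← ZMod.intCast_zmod_eq_zero_iff_dvd]
    push_cast
    exact h
  have hadd : x' + 2 ≠ 0 := by
    intro h
    apply h2'
    rw [← ZMod.intCast_zmod_eq_zero_iff_dvd]
    push_cast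
    exact h
  have hD : x' ^ 2 - 4 ≠ 0 := by
    intro h
    have : (x' - 2) * (x' + 2) = 0 := by rw [← h]; ring
    rcases mul_eq_zero.mp this with h | h
    exacts [hsub h, hadd h]
  -- the quadratic extension
  set f : Polynomial (ZMod ℓ) := X ^ 2 - C x' * X + C 1 with hf
  have hdeg : f.degree = 2 := by
    rw [hf]
    compute_degree!
  have hdeg' : f.degree ≠ 0 := by rw [hdeg]; norm_num
  set F := AdjoinRoot f
  haveI : Nontrivial F := AdjoinRoot.nontrivial f hdeg'
  have hinj : Function.Injective (AdjoinRoot.of f) :=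
    AdjoinRoot.of.injective_of_degree_ne_zero hdeg'
  haveI : CharP F ℓ := by
    have : (algebraMap (ZMod ℓ) F) = AdjoinRoot.of f := rfl
    exact charP_of_injective_algebraMap (this ▸ hinj) ℓ
  set φ := AdjoinRoot.of f
  set y : F := AdjoinRoot.root f
  have hroot : y ^ 2 - φ x' * y + 1 = 0 := by
    have := AdjoinRoot.eval₂_root f
    simpa [hf, Polynomial.eval₂_sub, Polynomial.eval₂_add] using this
  have hy2 : y ^ 2 = φ x' * y - 1 := by linear_combination hroot
  set z : F := φ x' - y with hz
  have hyz : y * z = 1 := by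
    rw [hz]
    linear_combination -hroot
  have hsq : (y - z) ^ 2 = φ (x' ^ 2 - 4) := by
    have h4 : φ (4 : ZMod ℓ) = 4 := map_ofNat φ 4
    rw [hz, map_sub, map_pow, h4]
    linear_combination (4 : F) * hy2
  -- main identity
  obtain ⟨m, hm⟩ := hodd
  have hℓpos : 1 ≤ ℓ := hℓ.one_lt.le.trans' (by norm_num)
  have hn1 : ℓ - 1 + 1 = ℓ := Nat.succ_pred_eq_of_pos hℓ.pos
  set U : ZMod ℓ := (Polynomial.dickson 2 (1 : ZMod ℓ) (ℓ - 1)).eval x' with hU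
  have key : (y - z) * φ U = y ^ ℓ - z ^ ℓ := by
    have := dickson_two_one_eval_add_inv y z hyz (ℓ - 1)
    rw [hn1] at this
    rw [← this]
    congr 1
    have hyz' : y + z = φ x' := by rw [hz]; ring
    rw [hU, ← Polynomial.eval₂_at_apply, Polynomial.eval₂_eq_eval_map,
      Polynomial.map_dickson, hyz']
    simp
  have frob : y ^ ℓ - z ^ ℓ = (y - z) ^ ℓ := (sub_pow_char (R := F) (p := ℓ) ..).symm
  have pow_eq : (y - z) ^ ℓ = (y - z) * φ ((x' ^ 2 - 4) ^ m) :=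
    calc (y - z) ^ ℓ = (y - z) ^ (2 * m + 1) := by rw [← hm]
      _ = ((y - z) ^ 2) ^ m * (y - z) := by rw [pow_succ, pow_mul]
      _ = (y - z) * φ ((x' ^ 2 - 4) ^ m) := by rw [hsq, ← map_pow, mul_comm]
  -- y - z is a unit
  have hunit : IsUnit (y - z) := by
    have : (y - z) * ((y - z) * φ (x' ^ 2 - 4)⁻¹) = 1 := by
      rw [← mul_assoc, ← sq, hsq, ← map_mul, mul_inv_cancel₀ hD, map_one]
    exact IsUnit.of_mul_eq_one _ this
  have hUeq : U = (x' ^ 2 - 4) ^ m := by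
    apply hinj
    have := key.trans (frob.trans pow_eq)
    exact hunit.mul_left_cancel this
  have hUsq : U * U = 1 := by
    rw [hUeq, ← pow_add]
    have : m + m = ℓ - 1 := by omega
    rw [this]
    exact ZMod.pow_card_sub_one_eq_one hD
  have hU1 : U = 1 ∨ U = -1 := mul_self_eq_one_iff.mp hUsq
  -- translate back to ℤ
  have hcast : (((chebU (ℓ - 1)).eval x : ℤ) : ZMod ℓ) = U := by
    rw [hU, chebU]
    show (Int.castRingHom (ZMod ℓ)) ((Polynomial.dickson 2 1 (ℓ - 1)).eval x) = _
    rw [← Polynomial.eval₂_at_apply (Int.castRingHom (ZMod ℓ)),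
      Polynomial.eval₂_eq_eval_map, Polynomial.map_dickson]
    simp [hx']
  rcases hU1 with h | h
  · left
    rw [← ZMod.intCast_zmod_eq_zero_iff_dvd]
    push_cast
    rw [hcast, h, sub_self]
  · right
    rw [← ZMod.intCast_zmod_eq_zero_iff_dvd]
    push_cast
    rw [hcast, h]
    ring
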